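/- Suppose g : ℝˢ → ℝ is differentiable with ∇g Lipschitz continuous with constant M on a convex set containing the segment [z - t·d, z] for all t ∈ [0, t̄], and d satisfies ‖d‖² ≤ (1/(2λ̲)) ∇g(z)ᵀd with ∇g(z)ᵀd ≥ 0. Then for every t with 0 ≤ t ≤ min{t̄, 2λ̲/M}: g(z) - g(z - t·d) ≥ (t/2) ∇g(z)ᵀ d. -/

import Mathlib

open Finset

/-- If ∇g is M-Lipschitz on a convex set containing the segment [z - t̄·d, z], and d
satisfies ‖d‖² ≤ (1/(2λ̲))∇g(z)ᵀd with ∇g(z)ᵀd ≥ 0, then for every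
0 ≤ t ≤ min{t̄, 2λ̲/M}: g(z) - g(z - t·d) ≥ (t/2)·∇g(z)ᵀd. -/
theorem stmt10 (s : ℕ)
    (g : EuclideanSpace ℝ (Fin s) → ℝ)
    (G : EuclideanSpace ℝ (Fin s) → EuclideanSpace ℝ (Fin s))
    (U : Set (EuclideanSpace ℝ (Fin s))) (hU : Convex ℝ U)
    (hGrad : ∀ u ∈ U, HasGradientAt g (G u) u)
    (M : ℝ) (hM : 0 < M)
    (hLip : ∀ u ∈ U, ∀ w ∈ U, ‖G u - G w‖ ≤ M * ‖u - w‖)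
    (lam : ℝ) (hlam : 0 < lam)
    (z d : EuclideanSpace ℝ (Fin s))
    (tbar : ℝ) (htbar : 0 ≤ tbar)
    (hseg : ∀ t ∈ Set.Icc (0 : ℝ) tbar, z - t • d ∈ U)
    (hd : ‖d‖ ^ 2 ≤ (1 / (2 * lam)) * inner ℝ (G z) d)
    (hpos : (0 : ℝ) ≤ inner ℝ (G z) d) :
    ∀ t : ℝ, 0 ≤ t → t ≤ min tbar (2 * lam / M) →
      g z - g (z - t • d) ≥ (t / 2) * inner ℝ (G z) d := by
  intro t ht0 htmin
  have htb : t ≤ tbar := le_trans htmin (min_le_left _ _)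
  have htM : t ≤ 2 * lam / M := le_trans htmin (min_le_right _ _)
  set A : ℝ := inner ℝ (G z) d with hA
  -- the auxiliary function
  set h : ℝ → ℝ := fun τ => g z - g (z - τ • d) - (τ * A - M * ‖d‖ ^ 2 * τ ^ 2 / 2) with hh
  -- derivative of φ : τ ↦ g (z - τ • d)
  have hderiv : ∀ τ ∈ Set.Icc (0 : ℝ) t,
      HasDerivAt h ((inner ℝ (G (z - τ • d)) d : ℝ) - A + M * ‖d‖ ^ 2 * τ) τ := by
    intro τ hτ
    have hmem : z - τ • d ∈ U := hseg τ ⟨hτ.1, le_trans hτ.2 htb⟩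
    have hc : HasDerivAt (fun τ : ℝ => z - τ • d) (-d) τ := by
      simpa using ((hasDerivAt_id τ).smul_const d).const_sub z
    have hg := (hGrad _ hmem).hasFDerivAt.comp_hasDerivAt τ hc
    have hval : (InnerProductSpace.toDual ℝ _ (G (z - τ • d))) (-d)
        = -(inner ℝ (G (z - τ • d)) d : ℝ) := by
      simp [InnerProductSpace.toDual_apply_apply, inner_neg_right]
    rw [hval] at hg
    have hq : HasDerivAt (fun τ : ℝ => τ * A - M * ‖d‖ ^ 2 * τ ^ 2 / 2)
        (A - M * ‖d‖ ^ 2 * τ) τ := by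
      have h1 : HasDerivAt (fun τ : ℝ => τ * A) A τ := by
        simpa using (hasDerivAt_id τ).mul_const A
      have h2 : HasDerivAt (fun τ : ℝ => M * ‖d‖ ^ 2 * τ ^ 2 / 2)
          (M * ‖d‖ ^ 2 * τ) τ := by
        have := ((hasDerivAt_pow 2 τ).const_mul (M * ‖d‖ ^ 2)).div_const 2
        exact this.congr_deriv (by push_cast; ring)
      exact h1.sub h2
    have := ((hasDerivAt_const τ (g z)).sub hg).sub hq
    exact this.congr_deriv (by ring)
  -- h is monotone on [0, t]
  have hmono : MonotoneOn h (Set.Icc 0 t) := by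
    apply monotoneOn_of_hasDerivWithinAt_nonneg (convex_Icc 0 t)
      (f' := fun τ => (inner ℝ (G (z - τ • d)) d : ℝ) - A + M * ‖d‖ ^ 2 * τ)
    · exact fun τ hτ => (hderiv τ hτ).continuousAt.continuousWithinAt
    · intro τ hτ
      exact (hderiv τ (Set.mem_of_mem_of_subset hτ
        (by rw [interior_Icc]; exact Set.Ioo_subset_Icc_self))).hasDerivWithinAt
    · intro τ hτ
      rw [interior_Icc] at hτ
      have hτ0 : (0:ℝ) ≤ τ := le_of_lt hτ.1
      have hmem : z - τ • d ∈ U := hseg τ ⟨hτ0, le_trans (le_of_lt hτ.2) htb⟩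
      have hz : z ∈ U := by simpa using hseg 0 ⟨le_refl _, htbar⟩
      have hlb : -(M * ‖d‖ ^ 2 * τ) ≤ (inner ℝ (G (z - τ • d)) d : ℝ) - A := by
        have h1 : (inner ℝ (G (z - τ • d)) d : ℝ) - A = inner ℝ (G (z - τ • d) - G z) d := by
          rw [hA, inner_sub_left]
        rw [h1]
        have h2 : |(inner ℝ (G (z - τ • d) - G z) d : ℝ)| ≤ ‖G (z - τ • d) - G z‖ * ‖d‖ :=
          abs_real_inner_le_norm _ _
        have h3 : ‖G (z - τ • d) - G z‖ ≤ M * ‖(z - τ • d) - z‖ := hLip _ hmem _ hz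
        have h4 : ‖(z - τ • d) - z‖ = τ * ‖d‖ := by
          rw [show (z - τ • d) - z = -(τ • d) by abel, norm_neg, norm_smul,
            Real.norm_eq_abs, abs_of_nonneg hτ0]
        have h5 : ‖G (z - τ • d) - G z‖ * ‖d‖ ≤ M * τ * ‖d‖ ^ 2 := by
          rw [h4] at h3
          nlinarith [norm_nonneg d]
        have := neg_abs_le ((inner ℝ (G (z - τ • d) - G z) d : ℝ))
        nlinarith [h2, h5]
      linarith
  have h0 : h 0 = 0 := by simp [hh]
  have key : 0 ≤ h t := by
    have := hmono (Set.left_mem_Icc.mpr ht0) (Set.right_mem_Icc.mpr ht0) ht0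
    rw [h0] at this; exact this
  -- conclude
  have hstep : g z - g (z - t • d) ≥ t * A - M * ‖d‖ ^ 2 * t ^ 2 / 2 := by
    have : h t = g z - g (z - t • d) - (t * A - M * ‖d‖ ^ 2 * t ^ 2 / 2) := rfl
    linarith [key, this ▸ key]
  have hdA : ‖d‖ ^ 2 ≤ (1 / (2 * lam)) * A := hd
  have htM' : M * t ≤ 2 * lam := by
    have := (le_div_iff₀ hM).mp htM; linarith
  have hfinal : M * ‖d‖ ^ 2 * t ^ 2 / 2 ≤ (t / 2) * A := by
    have h1 : M * t * ‖d‖ ^ 2 ≤ M * t * ((1 / (2 * lam)) * A) := by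
      apply mul_le_mul_of_nonneg_left hdA (by positivity)
    have h2 : M * t * ((1 / (2 * lam)) * A) ≤ 2 * lam * ((1 / (2 * lam)) * A) := by
      apply mul_le_mul_of_nonneg_right htM' (by positivity)
    have h3 : 2 * lam * ((1 / (2 * lam)) * A) = A := by
      field_simp
    nlinarith [h1, h2, h3]
  linarith [hstep, hfinal]
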